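/- Let u = φˣ ⊗ φʸ be a nonzero element of the Hartree manifold M = {φˣ ⊗ φʸ : φˣ ∈ L²(ℝ^{d₁}), φʸ ∈ L²(ℝ^{d₂})}. Then every tangent vector v of M at u can be written in the form v = vˣ ⊗ φʸ + φˣ ⊗ vʸ with vˣ ∈ L²(ℝ^{d₁}), vʸ ∈ L²(ℝ^{d₂}), and this representation is unique under the gauge condition ⟨φˣ, vˣ⟩_{L²} = 0. -/

import Mathlib

set_option linter.unusedSectionVars false


open MeasureTheory Filter

section aux

variable {α β : Type*} [MeasurableSpace α] [MeasurableSpace β]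
    {μ : Measure α} {ν : Measure β} [SFinite ν]

private lemma factor_aux {f f' : α → ℂ} {g g' : β → ℂ}
    (H : ∀ᵐ p ∂μ.prod ν, f p.1 * g p.2 = f' p.1 * g' p.2)
    (hf : ¬ f =ᵐ[μ] 0) (hg : ¬ g =ᵐ[ν] 0) :
    ∃ c : ℂ, c ≠ 0 ∧ f =ᵐ[μ] (fun x => c * f' x) ∧ g' =ᵐ[ν] (fun y => c * g y) := by
  have H' := Measure.ae_ae_of_ae_prod H
  have hf' : ∃ᶠ x in ae μ, f x ≠ 0 := by
    simpa [Filter.EventuallyEq, Filter.not_eventually] using hf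
  have hg' : ∃ᶠ y in ae ν, g y ≠ 0 := by
    simpa [Filter.EventuallyEq, Filter.not_eventually] using hg
  obtain ⟨x₀, hx₀, hx₀'⟩ := (hf'.and_eventually H').exists
  have hfx0 : f' x₀ ≠ 0 := by
    intro h0
    have hz : ∀ᵐ y ∂ν, g y = 0 := by
      filter_upwards [hx₀'] with y hy
      rw [h0, zero_mul] at hy
      exact (mul_eq_zero.1 hy).resolve_left hx₀
    obtain ⟨y, hy1, hy2⟩ := (hg'.and_eventually hz).exists
    exact hy1 hy2
  set c := f x₀ / f' x₀ with hc
  have claim2 : g' =ᵐ[ν] fun y => c * g y := by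
    filter_upwards [hx₀'] with y hy
    rw [hc]
    field_simp
    linear_combination -hy
  refine ⟨c, div_ne_zero hx₀ hfx0, ?_, claim2⟩
  filter_upwards [H'] with x hx
  have hgy : ∀ᵐ y ∂ν, f x * g y = c * f' x * g y := by
    filter_upwards [hx, claim2] with y hy hy2
    rw [hy, hy2]; ring
  obtain ⟨y, hy1, hy2⟩ := (hg'.and_eventually hgy).exists
  exact mul_right_cancel₀ hy1 hy2

private lemma sum_aux {a f : α → ℂ} {b g : β → ℂ}
    (H : ∀ᵐ p ∂μ.prod ν, a p.1 * g p.2 + f p.1 * b p.2 = 0)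
    (hf : ¬ f =ᵐ[μ] 0) (hg : ¬ g =ᵐ[ν] 0) :
    ∃ c : ℂ, a =ᵐ[μ] (fun x => c * f x) ∧ b =ᵐ[ν] (fun y => -c * g y) := by
  have H' := Measure.ae_ae_of_ae_prod H
  have hf' : ∃ᶠ x in ae μ, f x ≠ 0 := by
    simpa [Filter.EventuallyEq, Filter.not_eventually] using hf
  have hg' : ∃ᶠ y in ae ν, g y ≠ 0 := by
    simpa [Filter.EventuallyEq, Filter.not_eventually] using hg
  obtain ⟨x₀, hx₀, hx₀'⟩ := (hf'.and_eventually H').exists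
  set e := a x₀ / f x₀ with he
  have claim2 : b =ᵐ[ν] fun y => -e * g y := by
    filter_upwards [hx₀'] with y hy
    rw [he]
    field_simp
    linear_combination hy
  refine ⟨e, ?_, claim2⟩
  filter_upwards [H'] with x hx
  have hgy : ∀ᵐ y ∂ν, a x * g y = e * f x * g y := by
    filter_upwards [hx, claim2] with y hy hy2
    rw [hy2] at hy
    linear_combination hy
  obtain ⟨y, hy1, hy2⟩ := (hg'.and_eventually hgy).exists
  exact mul_right_cancel₀ hy1 hy2

end aux

section lpaux

variable {α β : Type*} [MeasurableSpace α] [MeasurableSpace β]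
    {μ : Measure α} {ν : Measure β} [SFinite μ] [SFinite ν]
    (T : Lp ℂ 2 μ →L[ℂ] Lp ℂ 2 ν →L[ℂ] Lp ℂ 2 (μ.prod ν))
    (hT : ∀ f g, ⇑(T f g) =ᵐ[μ.prod ν] fun p => f p.1 * g p.2)

private lemma lp_ne {f : Lp ℂ 2 μ} {g : Lp ℂ 2 ν} (hne : T f g ≠ 0) :
    ¬ ⇑f =ᵐ[μ] 0 ∧ ¬ ⇑g =ᵐ[ν] 0 := by
  constructor
  · intro h
    exact hne (by rw [Lp.eq_zero_iff_ae_eq_zero.2 h]; simp)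
  · intro h
    exact hne (by rw [Lp.eq_zero_iff_ae_eq_zero.2 h]; simp)

include hT in
private lemma lp_factor {f φx : Lp ℂ 2 μ} {g φy : Lp ℂ 2 ν}
    (heq : T f g = T φx φy) (hne : T φx φy ≠ 0) :
    ∃ c : ℂ, c ≠ 0 ∧ f = c • φx ∧ φy = c • g := by
  obtain ⟨hfne, hgne⟩ := lp_ne T (heq ▸ hne)
  have H : ∀ᵐ p ∂μ.prod ν, f p.1 * g p.2 = φx p.1 * φy p.2 := by
    have h1 := hT f g
    have h2 := hT φx φy
    rw [heq] at h1
    filter_upwards [h1, h2] with p hp1 hp2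
    rw [← hp1, ← hp2]
  obtain ⟨c, hc, h1, h2⟩ := factor_aux H hfne hgne
  refine ⟨c, hc, ?_, ?_⟩
  · refine Lp.ext ?_
    filter_upwards [h1, Lp.coeFn_smul c φx] with x hx hx2
    rw [hx, hx2]; simp
  · refine Lp.ext ?_
    filter_upwards [h2, Lp.coeFn_smul c g] with y hy hy2
    rw [hy, hy2]; simp

include hT in
private lemma lp_sum {a φx : Lp ℂ 2 μ} {b φy : Lp ℂ 2 ν}
    (h : T a φy + T φx b = 0) (hne : T φx φy ≠ 0) :
    ∃ c : ℂ, a = c • φx ∧ b = (-c) • φy := by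
  obtain ⟨hfne, hgne⟩ := lp_ne T hne
  have H : ∀ᵐ p ∂μ.prod ν, a p.1 * φy p.2 + φx p.1 * b p.2 = 0 := by
    have h0 : ⇑(T a φy + T φx b) =ᵐ[μ.prod ν] 0 := by
      rw [h]; exact Lp.coeFn_zero ℂ 2 (μ.prod ν)
    filter_upwards [h0, Lp.coeFn_add (T a φy) (T φx b), hT a φy, hT φx b]
      with p hp0 hpa hp1 hp2
    rw [← hp1, ← hp2]
    have h3 := hpa.symm.trans hp0
    simpa using h3
  obtain ⟨c, h1, h2⟩ := sum_aux H hfne hgne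
  refine ⟨c, ?_, ?_⟩
  · refine Lp.ext ?_
    filter_upwards [h1, Lp.coeFn_smul c φx] with x hx hx2
    rw [hx, hx2]; simp
  · refine Lp.ext ?_
    filter_upwards [h2, Lp.coeFn_smul (-c) φy] with y hy hy2
    rw [hy, hy2]; simp

end lpaux

set_option maxHeartbeats 8000000 in
/-- every tangent vector of the Hartree manifold at a nonzero product state
`u = φˣ ⊗ φʸ` has a unique representation `v = vˣ ⊗ φʸ + φˣ ⊗ vʸ` under the gauge
condition `⟨φˣ, vˣ⟩ = 0`.  The tensor product `⊗ : L² × L² → L²(product)` is any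
continuous bilinear map agreeing a.e. with `(x,y) ↦ f(x)g(y)`, and tangent vectors
are derivatives at `s = 0` of (differentiable) curves `s ↦ φˣ(s) ⊗ φʸ(s)` with
`φˣ(0) ⊗ φʸ(0) = u`. -/
theorem stmt_0 (d₁ d₂ : ℕ)
    (T : Lp ℂ 2 (volume : Measure (EuclideanSpace ℝ (Fin d₁))) →L[ℂ]
         Lp ℂ 2 (volume : Measure (EuclideanSpace ℝ (Fin d₂))) →L[ℂ]
         Lp ℂ 2 ((volume : Measure (EuclideanSpace ℝ (Fin d₁))).prod
            (volume : Measure (EuclideanSpace ℝ (Fin d₂)))))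
    (hT : ∀ f g, ⇑(T f g)
        =ᵐ[(volume : Measure (EuclideanSpace ℝ (Fin d₁))).prod
            (volume : Measure (EuclideanSpace ℝ (Fin d₂)))]
        fun p => f p.1 * g p.2)
    (φx : Lp ℂ 2 (volume : Measure (EuclideanSpace ℝ (Fin d₁))))
    (φy : Lp ℂ 2 (volume : Measure (EuclideanSpace ℝ (Fin d₂))))
    (hu : T φx φy ≠ 0)
    (v : Lp ℂ 2 ((volume : Measure (EuclideanSpace ℝ (Fin d₁))).prod
            (volume : Measure (EuclideanSpace ℝ (Fin d₂)))))
    (hv : ∃ (Γ : ℝ → Lp ℂ 2 (volume : Measure (EuclideanSpace ℝ (Fin d₁))) ×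
                    Lp ℂ 2 (volume : Measure (EuclideanSpace ℝ (Fin d₂))))
          (dΓ : Lp ℂ 2 (volume : Measure (EuclideanSpace ℝ (Fin d₁))) ×
                Lp ℂ 2 (volume : Measure (EuclideanSpace ℝ (Fin d₂)))),
        T (Γ 0).1 (Γ 0).2 = T φx φy ∧ HasDerivAt Γ dΓ 0 ∧
        HasDerivAt (fun s => T (Γ s).1 (Γ s).2) v 0) :
    ∃! p : Lp ℂ 2 (volume : Measure (EuclideanSpace ℝ (Fin d₁))) ×
           Lp ℂ 2 (volume : Measure (EuclideanSpace ℝ (Fin d₂))),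
      (inner ℂ φx p.1 : ℂ) = 0 ∧ v = T p.1 φy + T φx p.2 := by
  obtain ⟨Γ, dΓ, hΓ0, hΓd, hvd⟩ := hv
  -- derivative of the bilinear composition
  have hF := ((T.isBoundedBilinearMap.hasFDerivAt (Γ 0)).restrictScalars ℝ)
  have hbil : HasDerivAt (fun s => T (Γ s).1 (Γ s).2)
      (T.isBoundedBilinearMap.deriv (Γ 0) dΓ) 0 :=
    hF.comp_hasDerivAt 0 hΓd
  have hv1 : v = T (Γ 0).1 dΓ.2 + T dΓ.1 (Γ 0).2 := by
    have h5 := hvd.unique hbil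
    rw [h5, IsBoundedBilinearMap.deriv_apply]
  -- the curve passes through a multiple of (φx, φy)
  obtain ⟨c, hc, hΓ1, hΓ2'⟩ := lp_factor T hT hΓ0 hu
  have hΓ2 : (Γ 0).2 = c⁻¹ • φy := by
    rw [hΓ2', inv_smul_smul₀ hc]
  obtain ⟨a₀, ha₀⟩ : ∃ w, w = c⁻¹ • dΓ.1 := ⟨_, rfl⟩
  obtain ⟨b₀, hb₀⟩ : ∃ w, w = c • dΓ.2 := ⟨_, rfl⟩
  have hv2 : v = T a₀ φy + T φx b₀ := by
    rw [hv1, hΓ1, hΓ2, ha₀, hb₀]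
    simp only [_root_.map_smul, ContinuousLinearMap.smul_apply]
    abel
  have hφx0 : φx ≠ 0 := by
    intro h
    apply hu
    rw [h]; simp
  have hip : (inner ℂ φx φx : ℂ) ≠ 0 := inner_self_ne_zero.2 hφx0
  obtain ⟨γ, hγ⟩ : ∃ w : ℂ, w = (inner ℂ φx a₀ : ℂ) / (inner ℂ φx φx : ℂ) := ⟨_, rfl⟩
  obtain ⟨a, ha⟩ : ∃ w, w = a₀ - γ • φx := ⟨_, rfl⟩
  obtain ⟨b, hb⟩ : ∃ w, w = b₀ + γ • φy := ⟨_, rfl⟩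
  have hgauge : (inner ℂ φx a : ℂ) = 0 := by
    rw [ha, inner_sub_right, inner_smul_right, hγ, div_mul_cancel₀ _ hip, sub_self]
  have hrep : v = T a φy + T φx b := by
    rw [ha, hb, hv2]
    simp only [map_sub, map_add, _root_.map_smul,
      ContinuousLinearMap.smul_apply, ContinuousLinearMap.sub_apply]
    abel
  refine ⟨⟨a, b⟩, ⟨hgauge, hrep⟩, ?_⟩
  rintro ⟨a', b'⟩ ⟨hG, hR⟩
  have h1 : T a' φy + T φx b' = T a φy + T φx b := hR.symm.trans hrep
  have h0 : T (a' - a) φy + T φx (b' - b) = 0 := by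
    calc T (a' - a) φy + T φx (b' - b)
        = (T a' φy + T φx b') - (T a φy + T φx b) := by
          simp only [map_sub, ContinuousLinearMap.sub_apply]; abel
      _ = 0 := by rw [h1, sub_self]
  obtain ⟨d, hd1, hd2⟩ := lp_sum T hT h0 hu
  have h2 : (inner ℂ φx (a' - a) : ℂ) = 0 := by
    rw [inner_sub_right, hG, hgauge, sub_zero]
  rw [hd1, inner_smul_right] at h2
  have hd0 : d = 0 := by
    rcases mul_eq_zero.1 h2 with h | h
    · exact h
    · exact absurd h hip
  have hae : a' = a := by
    have := hd1
    rw [hd0, zero_smul, sub_eq_zero] at this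
    exact this
  have hbe : b' = b := by
    have := hd2
    rw [hd0, neg_zero, zero_smul, sub_eq_zero] at this
    exact this
  exact Prod.ext hae hbe
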